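/- Given mass M > 0 and energy E > 0 with ρ(ε) = ε²/2, let α = (3ζ(4)/E)^{1/4} be the unique solution of ∫₀^∞ ρ(ε) ε/(e^{αε}−1) dε = E, and let I_α = ζ(3)/α³ = ζ(3)·(E/(3ζ(4)))^{3/4}. Then condensation occurs (I_α < M) if and only if E < 3ζ(4) M^{4/3}/ζ(3)^{4/3}, and in that case the equilibrium condensate mass fraction is M_c/M = 1 − (ζ(3)/M)·(E/(3ζ(4)))^{3/4}. -/

import Mathlib

open MeasureTheory

/-- The Riemann zeta function on the reals (for `s > 1`), `ζ(s) = Σ_{n≥1} n^{-s}`. -/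
noncomputable def zetaR (s : ℝ) : ℝ := ∑' n : ℕ, 1 / ((n : ℝ) + 1) ^ s


open Set Real

lemma summable_zetaR {s : ℝ} (hs : 1 < s) :
    Summable (fun n : ℕ => 1 / ((n : ℝ) + 1) ^ s) := by
  have h := Real.summable_one_div_nat_rpow.mpr hs
  have h2 := (summable_nat_add_iff 1).mpr h
  exact h2.congr (fun n => by push_cast; ring_nf)

lemma zetaR_pos {s : ℝ} (hs : 1 < s) : 0 < zetaR s := by
  refine Summable.tsum_pos (summable_zetaR hs) (fun n => by positivity) 0 ?_
  norm_num

lemma integral_pow3_exp {r : ℝ} (hr : 0 < r) :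
    ∫ x in Ioi (0:ℝ), x ^ 3 * Real.exp (-(r * x)) = 6 / r ^ 4 := by
  have h := Real.integral_rpow_mul_exp_neg_mul_Ioi (a := 4) (r := r) (by norm_num) hr
  rw [show ((4:ℝ) - 1) = (3:ℝ) by norm_num] at h
  have hg : Real.Gamma 4 = 6 := by
    rw [show (4:ℝ) = (3:ℕ) + 1 by norm_num, Real.Gamma_nat_eq_factorial]
    norm_num [Nat.factorial]
  have heq : ∫ x in Ioi (0:ℝ), x ^ 3 * Real.exp (-(r * x))
      = ∫ x in Ioi (0:ℝ), x ^ (3:ℝ) * Real.exp (-(r * x)) := by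
    refine setIntegral_congr_fun measurableSet_Ioi (fun x hx => ?_)
    rw [show (3:ℝ) = ((3:ℕ):ℝ) by norm_num, Real.rpow_natCast]
  rw [heq, h, hg]
  rw [div_rpow one_pos.le hr.le, Real.one_rpow,
    show (4:ℝ) = ((4:ℕ):ℝ) by norm_num, Real.rpow_natCast]
  ring

lemma integrable_pow3_exp {r : ℝ} (hr : 0 < r) :
    IntegrableOn (fun x : ℝ => x ^ 3 * Real.exp (-(r * x))) (Ioi 0) := by
  have h := integrableOn_rpow_mul_exp_neg_mul_rpow (p := 1) (s := 3) (b := r)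
    (by norm_num) (by norm_num) hr
  refine (h.congr_fun (fun x hx => ?_) measurableSet_Ioi)
  dsimp only
  rw [Real.rpow_one, show (3:ℝ) = ((3:ℕ):ℝ) by norm_num, Real.rpow_natCast, neg_mul]

lemma geom_sum_exp {y : ℝ} (hy : 0 < y) :
    ∑' n : ℕ, Real.exp (-(((n : ℝ) + 1) * y)) = 1 / (Real.exp y - 1) := by
  have hr1 : Real.exp (-y) < 1 := Real.exp_lt_one_iff.mpr (by linarith)
  have hterm : ∀ n : ℕ, Real.exp (-(((n : ℝ) + 1) * y)) = Real.exp (-y) ^ (n + 1) := by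
    intro n
    rw [← Real.exp_nat_mul]
    push_cast
    ring_nf
  calc ∑' n : ℕ, Real.exp (-(((n : ℝ) + 1) * y))
      = ∑' n : ℕ, Real.exp (-y) * Real.exp (-y) ^ n := by
        refine tsum_congr fun n => ?_
        rw [hterm n, pow_succ]; ring
    _ = Real.exp (-y) * ∑' n : ℕ, Real.exp (-y) ^ n := tsum_mul_left
    _ = Real.exp (-y) * (1 - Real.exp (-y))⁻¹ := by
        rw [tsum_geometric_of_lt_one (Real.exp_pos _).le hr1]
    _ = 1 / (Real.exp y - 1) := by
        have h1 : (1:ℝ) < Real.exp y := by nlinarith [Real.add_one_le_exp y]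
        rw [Real.exp_neg]
        field_simp

lemma bose_integral {a : ℝ} (ha : 0 < a) :
    ∫ x in Ioi (0:ℝ), x ^ 3 / (Real.exp (a * x) - 1) = 6 * zetaR 4 / a ^ 4 := by
  set F : ℕ → ℝ → ℝ := fun n x => x ^ 3 * Real.exp (-(((n : ℝ) + 1) * a * x)) with hF
  have hint : ∀ n : ℕ, IntegrableOn (F n) (Ioi 0) := by
    intro n
    have : (0:ℝ) < ((n:ℝ) + 1) * a := by positivity
    exact integrable_pow3_exp this
  have hval : ∀ n : ℕ, ∫ x in Ioi (0:ℝ), F n x = 6 / (((n:ℝ) + 1) ^ 4 * a ^ 4) := by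
    intro n
    have hr : (0:ℝ) < ((n:ℝ) + 1) * a := by positivity
    have := integral_pow3_exp hr
    rw [hF]
    simp only []
    rw [this, mul_pow]
  have hnorm : ∀ n : ℕ, ∫ x in Ioi (0:ℝ), ‖F n x‖ = 6 / (((n:ℝ) + 1) ^ 4 * a ^ 4) := by
    intro n
    rw [← hval n]
    refine setIntegral_congr_fun measurableSet_Ioi (fun x hx => ?_)
    rw [Real.norm_of_nonneg]
    have : (0:ℝ) < x := hx
    positivity
  have hsum : Summable fun n : ℕ => ∫ x in Ioi (0:ℝ), ‖F n x‖ := by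
    simp only [hnorm]
    have h4 : Summable (fun n : ℕ => 1 / ((n:ℝ) + 1) ^ (4:ℝ)) := summable_zetaR (by norm_num)
    have h4' : Summable (fun n : ℕ => 1 / ((n:ℝ) + 1) ^ (4:ℕ)) := by
      refine h4.congr fun n => ?_
      rw [show ((4:ℝ)) = ((4:ℕ):ℝ) by norm_num, Real.rpow_natCast]
    refine ((h4'.mul_left (6 / a ^ 4)).congr fun n => ?_)
    field_simp
  have key := MeasureTheory.integral_tsum_of_summable_integral_norm
    (μ := volume.restrict (Ioi (0:ℝ))) hint hsum |>.symm
  have hpt : ∀ x ∈ Ioi (0:ℝ), x ^ 3 / (Real.exp (a * x) - 1) = ∑' n : ℕ, F n x := by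
    intro x hx
    have hx0 : (0:ℝ) < x := hx
    have hax : 0 < a * x := by positivity
    have := geom_sum_exp hax
    rw [hF]
    simp only []
    have : ∑' n : ℕ, x ^ 3 * Real.exp (-(((n:ℝ) + 1) * a * x))
        = x ^ 3 * ∑' n : ℕ, Real.exp (-(((n:ℝ) + 1) * (a * x))) := by
      rw [← tsum_mul_left]
      exact tsum_congr fun n => by ring_nf
    rw [this, geom_sum_exp hax]
    ring
  calc ∫ x in Ioi (0:ℝ), x ^ 3 / (Real.exp (a * x) - 1)
      = ∫ x in Ioi (0:ℝ), ∑' n : ℕ, F n x :=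
        setIntegral_congr_fun measurableSet_Ioi hpt
    _ = ∑' n : ℕ, ∫ x in Ioi (0:ℝ), F n x := key
    _ = ∑' n : ℕ, 6 / (((n:ℝ) + 1) ^ 4 * a ^ 4) := tsum_congr hval
    _ = 6 * zetaR 4 / a ^ 4 := by
        have h : (∑' n : ℕ, 6 / (((n:ℝ) + 1) ^ 4 * a ^ 4))
            = ∑' n : ℕ, (6 / a ^ 4) * (1 / ((n:ℝ) + 1) ^ (4:ℝ)) := by
          refine tsum_congr fun n => ?_
          rw [show ((4:ℝ)) = ((4:ℕ):ℝ) by norm_num, Real.rpow_natCast]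
          have hn : ((n:ℝ) + 1) ^ (4:ℕ) ≠ 0 := by positivity
          field_simp
        rw [h, tsum_mul_left, zetaR]
        ring

lemma crit_iff {K Z M E : ℝ} (hK : 0 < K) (hZ : 0 < Z) (hM : 0 < M) (hE : 0 < E) :
    Z * (E / K) ^ ((3:ℝ)/4) < M ↔ E < K * M ^ ((4:ℝ)/3) / Z ^ ((4:ℝ)/3) := by
  have hEK : (0:ℝ) ≤ E / K := by positivity
  have hMZ : (0:ℝ) ≤ M / Z := by positivity
  have hback : ((E/K) ^ ((3:ℝ)/4)) ^ ((4:ℝ)/3) = E / K := by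
    rw [← Real.rpow_mul hEK]; norm_num
  have hback2 : ((M/Z) ^ ((4:ℝ)/3)) ^ ((3:ℝ)/4) = M / Z := by
    rw [← Real.rpow_mul hMZ]; norm_num
  have hRHS : K * M ^ ((4:ℝ)/3) / Z ^ ((4:ℝ)/3) = K * (M/Z) ^ ((4:ℝ)/3) := by
    rw [Real.div_rpow hM.le hZ.le]; ring
  rw [hRHS]
  constructor
  · intro h
    rw [mul_comm] at h
    have h1 : (E/K) ^ ((3:ℝ)/4) < M / Z := (lt_div_iff₀ hZ).mpr h
    have h2 := Real.rpow_lt_rpow (by positivity) h1 (by norm_num : (0:ℝ) < (4:ℝ)/3)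
    rw [hback] at h2
    calc E = K * (E/K) := by field_simp
      _ < K * (M/Z) ^ ((4:ℝ)/3) := (mul_lt_mul_iff_right₀ hK).mpr h2
  · intro h
    have h1 : E / K < (M/Z) ^ ((4:ℝ)/3) := by
      rw [div_lt_iff₀ hK]; linarith [mul_comm K ((M/Z) ^ ((4:ℝ)/3))]
    have h2 := Real.rpow_lt_rpow hEK h1 (by norm_num : (0:ℝ) < (3:ℝ)/4)
    rw [hback2] at h2
    rw [mul_comm]
    exact (lt_div_iff₀ hZ).mp h2

/-- Condensation criterion for a 3D harmonic trap: with
`α = (3ζ(4)/E)^{1/4}` matching the energy `E` and `I_α = ζ(3)/α³`, one has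
`I_α = ζ(3)(E/(3ζ(4)))^{3/4}`, condensation `I_α < M` occurs iff
`E < 3ζ(4) M^{4/3}/ζ(3)^{4/3}`, and then the condensate mass fraction is
`M_c/M = 1 − (ζ(3)/M)(E/(3ζ(4)))^{3/4}`. -/
theorem condensation_criterion (M E : ℝ) (hM : 0 < M) (hE : 0 < E)
    (α : ℝ) (hα : α = (3 * zetaR 4 / E) ^ ((1 : ℝ) / 4)) :
    (∫ ε in Set.Ioi (0 : ℝ), ε ^ 2 / 2 * ε / (Real.exp (α * ε) - 1)) = E ∧
    zetaR 3 / α ^ 3 = zetaR 3 * (E / (3 * zetaR 4)) ^ ((3 : ℝ) / 4) ∧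
    (zetaR 3 / α ^ 3 < M ↔
      E < 3 * zetaR 4 * M ^ ((4 : ℝ) / 3) / zetaR 3 ^ ((4 : ℝ) / 3)) ∧
    (zetaR 3 / α ^ 3 < M →
      (M - zetaR 3 / α ^ 3) / M =
        1 - zetaR 3 / M * (E / (3 * zetaR 4)) ^ ((3 : ℝ) / 4)) := by
  have hz4 : 0 < zetaR 4 := zetaR_pos (by norm_num)
  have hz3 : 0 < zetaR 3 := zetaR_pos (by norm_num)
  have hb : 0 < 3 * zetaR 4 / E := by positivity
  have hαpos : 0 < α := hα ▸ Real.rpow_pos_of_pos hb _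
  have hα4 : α ^ 4 = 3 * zetaR 4 / E := by
    rw [hα, ← Real.rpow_natCast _ 4, ← Real.rpow_mul hb.le]
    norm_num
  have hα3 : α ^ 3 = (3 * zetaR 4 / E) ^ ((3:ℝ)/4) := by
    rw [hα, ← Real.rpow_natCast _ 3, ← Real.rpow_mul hb.le]
    norm_num
  have h2 : zetaR 3 / α ^ 3 = zetaR 3 * (E / (3 * zetaR 4)) ^ ((3:ℝ)/4) := by
    rw [hα3, show E / (3 * zetaR 4) = (3 * zetaR 4 / E)⁻¹ by rw [inv_div],
      Real.inv_rpow hb.le, div_eq_mul_inv]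
  refine ⟨?_, h2, ?_, ?_⟩
  · have heq : (∫ ε in Set.Ioi (0:ℝ), ε ^ 2 / 2 * ε / (Real.exp (α * ε) - 1))
        = ∫ ε in Set.Ioi (0:ℝ), (1/2) * (ε ^ 3 / (Real.exp (α * ε) - 1)) := by
      refine setIntegral_congr_fun measurableSet_Ioi fun x hx => by ring
    rw [heq, MeasureTheory.integral_const_mul, bose_integral hαpos, hα4]
    have h4 : zetaR 4 ≠ 0 := hz4.ne'
    field_simp
    ring
  · rw [h2]
    exact crit_iff (by positivity) hz3 hM hE
  · intro h
    rw [h2]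
    field_simp
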